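/- For the path P_n on n ≥ 2 vertices, mc^{nh}_n(P_n) = ⌊n/2⌋. -/
import Mathlib


open SimpleGraph

/-- `w_ψ`-style: `mcA k G` is the max over labelings `ψ : V → {1,…,k}` of the
minimum of `|ψ u − ψ v|` over edges, phrased via `sSup`. -/
noncomputable def mcA {V : Type*} (k : ℕ) (G : SimpleGraph V) : ℕ :=
  sSup {m | ∃ ψ : V → ℕ, (∀ v, ψ v ∈ Finset.Icc 1 k) ∧
    ∀ u v, G.Adj u v → m ≤ Nat.dist (ψ u) (ψ v)}

/-- No-hole anti-n-labeling number: `ψ` is a bijection from `V` onto `{1,…,n}`,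
`n = |V|`. -/
noncomputable def mcNH {V : Type*} [Fintype V] (G : SimpleGraph V) : ℕ :=
  sSup {m | ∃ ψ : V → ℕ, Set.BijOn ψ Set.univ (Set.Icc 1 (Fintype.card V)) ∧
    ∀ u v, G.Adj u v → m ≤ Nat.dist (ψ u) (ψ v)}

theorem stmt_13 (n : ℕ) (hn : 2 ≤ n) :
    mcNH (SimpleGraph.pathGraph n) = n / 2 := by
  classical
  have hcard : Fintype.card (Fin n) = n := Fintype.card_fin n
  set S := {m | ∃ ψ : Fin n → ℕ,
      Set.BijOn ψ Set.univ (Set.Icc 1 (Fintype.card (Fin n))) ∧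
      ∀ u v, (pathGraph n).Adj u v → m ≤ Nat.dist (ψ u) (ψ v)} with hS
  have hmem : n / 2 ∈ S := by
    refine ⟨fun i => if i.val % 2 = 0 then i.val / 2 + 1 + n / 2 else (i.val + 1) / 2,
      ?_, ?_⟩
    · rw [hcard]
      refine ⟨?_, ?_, ?_⟩
      · intro i _
        have := i.isLt
        simp only [Set.mem_Icc]
        split <;> omega
      · intro i _ j _ hij
        have hi := i.isLt; have hj := j.isLt
        apply Fin.ext
        by_cases h1 : i.val % 2 = 0 <;> by_cases h2 : j.val % 2 = 0 <;>
          simp only [h1, h2, if_true, if_false, if_pos, if_neg, reduceIte] at hij <;>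
          omega
      · intro l hl
        simp only [Set.mem_Icc] at hl
        by_cases h : l ≤ n / 2
        · refine ⟨⟨2 * l - 1, by omega⟩, Set.mem_univ _, ?_⟩
          have h1 : (2 * l - 1) % 2 = 1 := by omega
          simp only [h1]
          norm_num
          omega
        · refine ⟨⟨2 * (l - n / 2 - 1), by omega⟩, Set.mem_univ _, ?_⟩
          have h1 : (2 * (l - n / 2 - 1)) % 2 = 0 := by omega
          simp only [h1]
          norm_num
          omega
    · intro u v huv
      rw [pathGraph_adj] at huv
      have hu := u.isLt; have hv := v.isLt
      by_cases h1 : u.val % 2 = 0 <;> by_cases h2 : v.val % 2 = 0 <;>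
        simp only [h1, h2, if_true, if_false, reduceIte, Nat.dist] <;> omega
  have hub : ∀ m ∈ S, m ≤ n / 2 := by
    rintro m ⟨φ, hbij, hadj⟩
    rw [hcard] at hbij
    obtain ⟨u, -, hu⟩ := hbij.surjOn (show n / 2 + 1 ∈ Set.Icc 1 n by
      constructor <;> omega)
    have hult := u.isLt
    by_cases hlt : u.val + 1 < n
    · have h1 := hadj u ⟨u.val + 1, hlt⟩ (by rw [pathGraph_adj]; left; rfl)
      have h2 := hbij.mapsTo (Set.mem_univ (⟨u.val + 1, hlt⟩ : Fin n))
      simp only [Set.mem_Icc, Nat.dist] at h1 h2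
      omega
    · have hpos : u.val - 1 < n := by omega
      have h1 := hadj u ⟨u.val - 1, hpos⟩ (by rw [pathGraph_adj]; right; simp; omega)
      have h2 := hbij.mapsTo (Set.mem_univ (⟨u.val - 1, hpos⟩ : Fin n))
      simp only [Set.mem_Icc, Nat.dist] at h1 h2
      omega
  have hbdd : BddAbove S := ⟨n / 2, hub⟩
  exact le_antisymm (csSup_le ⟨n / 2, hmem⟩ hub) (le_csSup hbdd hmem)
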